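/- Let K be an algebraically closed field, k₁, k₂ positive integers, A = diag(λ,μ) an invertible diagonal matrix, and B = diag(ξ₁,ξ₂) an invertible diagonal matrix. Then the map (X,Y) ↦ AX^{k₁} + BY^{k₂} on M(2,K) is surjective. -/

import Mathlib

open Finset in
lemma pow_lower_tri {K : Type*} [CommRing K] (α β γ : K) (n : ℕ) :
    (!![α, 0; β, γ] : Matrix (Fin 2) (Fin 2) K) ^ n =
    !![α ^ n, 0; β * ∑ i ∈ range n, α ^ i * γ ^ (n - 1 - i), γ ^ n] := by
  induction n with
  | zero => simp [Matrix.one_fin_two]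
  | succ n ih =>
    have hS : (∑ i ∈ range (n+1), α ^ i * γ ^ (n + 1 - 1 - i)) =
        α * (∑ i ∈ range n, α ^ i * γ ^ (n - 1 - i)) + γ ^ n := by
      rw [Finset.sum_range_succ', Finset.mul_sum]
      congr 1
      · refine Finset.sum_congr rfl fun i hi => ?_
        have : n + 1 - 1 - (i + 1) = n - 1 - i := by omega
        rw [this]; ring
      · simp
    rw [pow_succ, ih, Matrix.mul_fin_two, hS]
    ext i j
    fin_cases i <;> fin_cases j <;> simp <;> ring

open Finset in
lemma pow_upper_tri {K : Type*} [CommRing K] (α β γ : K) (n : ℕ) :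
    (!![α, β; 0, γ] : Matrix (Fin 2) (Fin 2) K) ^ n =
    !![α ^ n, β * ∑ i ∈ range n, α ^ i * γ ^ (n - 1 - i); 0, γ ^ n] := by
  induction n with
  | zero => simp [Matrix.one_fin_two]
  | succ n ih =>
    have hS : (∑ i ∈ range (n+1), α ^ i * γ ^ (n + 1 - 1 - i)) =
        α * (∑ i ∈ range n, α ^ i * γ ^ (n - 1 - i)) + γ ^ n := by
      rw [Finset.sum_range_succ', Finset.mul_sum]
      congr 1
      · refine Finset.sum_congr rfl fun i hi => ?_
        have : n + 1 - 1 - (i + 1) = n - 1 - i := by omega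
        rw [this]; ring
      · simp
    rw [pow_succ', ih, Matrix.mul_fin_two, hS]
    ext i j
    fin_cases i <;> fin_cases j <;> simp <;> ring

theorem stmt8 (K : Type*) [Field K] [IsAlgClosed K] (k₁ k₂ : ℕ)
    (hk₁ : 0 < k₁) (hk₂ : 0 < k₂) (l m ξ₁ ξ₂ : K)
    (hA : l * m ≠ 0) (hB : ξ₁ * ξ₂ ≠ 0) :
    Function.Surjective (fun XY : Matrix (Fin 2) (Fin 2) K × Matrix (Fin 2) (Fin 2) K =>
      !![l, 0; 0, m] * XY.1 ^ k₁ + !![ξ₁, 0; 0, ξ₂] * XY.2 ^ k₂) := by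
  have hm : m ≠ 0 := fun h => hA (by rw [h, mul_zero])
  have hξ₁ : ξ₁ ≠ 0 := fun h => hB (by rw [h, zero_mul])
  have hξ₂ : ξ₂ ≠ 0 := fun h => hB (by rw [h, mul_zero])
  classical
  intro C
  -- pick r ≠ 0 with u ≠ v
  obtain ⟨r, hr⟩ := Infinite.exists_notMem_finset
    ({0, (C 1 1 - ξ₂ * (C 0 0 / ξ₁)) / m} : Finset K)
  simp only [Finset.mem_insert, Finset.mem_singleton, not_or] at hr
  obtain ⟨hr0, hr1⟩ := hr
  set u : K := C 0 0 / ξ₁ with hu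
  set v : K := (C 1 1 - m * r) / ξ₂ with hv
  have huv : u ≠ v := by
    intro h
    apply hr1
    rw [hv, div_eq_div_iff hξ₁ hξ₂] at h
    rw [eq_div_iff hm, hu]
    field_simp
    linear_combination h
  -- k₁-th root of r
  obtain ⟨γ, hγ⟩ := IsAlgClosed.exists_pow_nat_eq r hk₁
  -- k₂-th roots of u and v
  obtain ⟨δ, hδ⟩ := IsAlgClosed.exists_pow_nat_eq u hk₂
  obtain ⟨ε, hε⟩ := IsAlgClosed.exists_pow_nat_eq v hk₂
  set S₁ : K := ∑ i ∈ Finset.range k₁, (0:K) ^ i * γ ^ (k₁ - 1 - i) with hS₁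
  set S₂ : K := ∑ i ∈ Finset.range k₂, δ ^ i * ε ^ (k₂ - 1 - i) with hS₂
  have hS₁g : S₁ * ((0:K) - γ) = (0:K) ^ k₁ - γ ^ k₁ := geom_sum₂_mul 0 γ k₁
  have hS₂g : S₂ * (δ - ε) = δ ^ k₂ - ε ^ k₂ := geom_sum₂_mul δ ε k₂
  have hS₁0 : S₁ ≠ 0 := by
    intro h
    rw [h, zero_mul] at hS₁g
    rw [zero_pow hk₁.ne', hγ] at hS₁g
    exact hr0 (by linear_combination hS₁g)
  have hS₂0 : S₂ ≠ 0 := by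
    intro h
    rw [h, zero_mul] at hS₂g
    rw [hδ, hε] at hS₂g
    exact huv (sub_eq_zero.mp hS₂g.symm)
  refine ⟨(!![0, 0; C 1 0 / m / S₁, γ], !![δ, C 0 1 / ξ₁ / S₂; 0, ε]), ?_⟩
  simp only
  rw [pow_lower_tri, pow_upper_tri, ← hS₁, ← hS₂, hγ, hδ, hε,
    Matrix.mul_fin_two, Matrix.mul_fin_two]
  have e1 : C 1 0 / m / S₁ * S₁ = C 1 0 / m := div_mul_cancel₀ _ hS₁0
  have e2 : C 0 1 / ξ₁ / S₂ * S₂ = C 0 1 / ξ₁ := div_mul_cancel₀ _ hS₂0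
  rw [Matrix.eta_fin_two C]
  ext i j
  fin_cases i <;> fin_cases j <;>
    simp [e1, e2, hu, hv, zero_pow hk₁.ne'] <;> field_simp <;> ring
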